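/- Let ρ₁ > 0, θ₁, θ₂ ∈ ℝ with α = θ₁ − θ₂, and suppose ρ₁² ≥ 1 + cos α. Then the squared distance from the diagonal point P = (ρ₁ e^{iθ₁}, ρ₁ e^{iθ₂}) to Γ is dist(P, Γ)² = ρ₁² − cos α. -/

import Mathlib

/- STATEMENT 8: squared distance of a diagonal point to Γ when ρ₁² ≥ 1 + cos α. -/

noncomputable section

open Complex Metric
open scoped Real

/-- ℂ² with the Euclidean (ℝ⁴) distance. -/
abbrev C2 : Type := EuclideanSpace ℂ (Fin 2)

/-- The point (z, w) ∈ ℂ². -/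
def pt (z w : ℂ) : C2 := (WithLp.equiv 2 (Fin 2 → ℂ)).symm ![z, w]

/-- The point of Γ with parameters (ρ, θ). -/
def gpt (ρ θ : ℝ) : C2 :=
  pt (((Real.sqrt 2 / 2 * ρ : ℝ) : ℂ) * Complex.exp ((θ : ℂ) * Complex.I))
     (((Real.sqrt 2 / 2 * ρ⁻¹ : ℝ) : ℂ) * Complex.exp ((θ : ℂ) * Complex.I))

/-- The special Lagrangian surface Γ ⊂ ℂ². -/
def Gam : Set C2 := {p | ∃ ρ θ : ℝ, 0 < ρ ∧ p = gpt ρ θ}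

/-- The point (ρ₁ e^{iθ₁}, ρ₂ e^{iθ₂}) ∈ ℂ². -/
def ppt (ρ₁ θ₁ ρ₂ θ₂ : ℝ) : C2 :=
  pt ((ρ₁ : ℂ) * Complex.exp ((θ₁ : ℂ) * Complex.I))
     ((ρ₂ : ℂ) * Complex.exp ((θ₂ : ℂ) * Complex.I))

lemma dist_pt_sq (z w z' w' : ℂ) : dist (pt z w) (pt z' w') ^ 2
    = ‖z - z'‖ ^ 2 + ‖w - w'‖ ^ 2 := by
  rw [EuclideanSpace.dist_eq, Real.sq_sqrt (by positivity)]
  simp [pt, Fin.sum_univ_two, Complex.dist_eq]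

lemma abs_term (r a s θ : ℝ) :
    ‖(r:ℂ)*Complex.exp ((a:ℂ)*Complex.I) - (s:ℂ)*Complex.exp ((θ:ℂ)*Complex.I)‖ ^ 2
    = r^2 + s^2 - 2*r*s*Real.cos (a - θ) := by
  rw [Complex.sq_norm, Complex.normSq_apply]
  simp [Complex.exp_mul_I, Complex.cos_ofReal_re, Complex.sin_ofReal_re, Real.cos_sub]
  nlinarith [Real.sin_sq_add_cos_sq a, Real.sin_sq_add_cos_sq θ]

lemma dist_formula (ρ₁ θ₁ θ₂ ρ θ : ℝ) :
    dist (ppt ρ₁ θ₁ ρ₁ θ₂) (gpt ρ θ) ^ 2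
    = 2*ρ₁^2 + (ρ^2 + (ρ⁻¹)^2)/2
      - Real.sqrt 2 * ρ₁ * (ρ * Real.cos (θ₁ - θ) + ρ⁻¹ * Real.cos (θ₂ - θ)) := by
  rw [ppt, gpt, dist_pt_sq, abs_term, abs_term]
  have h2 : Real.sqrt 2 ^ 2 = 2 := Real.sq_sqrt (by norm_num)
  linear_combination ((ρ^2 + (ρ⁻¹)^2)/4) * h2

lemma lb_alg (ρ₁ ρ ρi cb sb cg sg c : ℝ)
    (hinv : ρ * ρi = 1) (hc2 : c^2 = 2)
    (e1 : sb^2 + cb^2 = 1) (e2 : sg^2 + cg^2 = 1) :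
    ρ₁ ^ 2 - (cb*cg + sb*sg) ≤ 2*ρ₁^2 + (ρ^2 + ρi^2)/2 - c * ρ₁ * (ρ * cb + ρi * cg) := by
  have key : (ρ*sb + ρi*sg)^2 = ρ^2*sb^2 + 2*sb*sg + ρi^2*sg^2 := by
    have : (ρ*sb + ρi*sg)^2 = ρ^2*sb^2 + 2*(ρ*ρi)*sb*sg + ρi^2*sg^2 := by ring
    rw [this, hinv]; ring
  have keyA : (ρ*cb + ρi*cg)^2 = ρ^2*cb^2 + 2*cb*cg + ρi^2*cg^2 := by
    have : (ρ*cb + ρi*cg)^2 = ρ^2*cb^2 + 2*(ρ*ρi)*cb*cg + ρi^2*cg^2 := by ring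
    rw [this, hinv]; ring
  have hA2 : (ρ*cb + ρi*cg)^2 ≤ ρ^2 + ρi^2 + 2*(cb*cg + sb*sg) := by
    nlinarith [sq_nonneg (ρ*sb + ρi*sg), sq_nonneg ρ, sq_nonneg ρi]
  have hAM : 2*(c*ρ₁)*(ρ*cb + ρi*cg) ≤ 2*ρ₁^2 + (ρ*cb + ρi*cg)^2 := by
    nlinarith [sq_nonneg (c*ρ₁ - (ρ*cb + ρi*cg))]
  linarith

lemma lower_bound (ρ₁ θ₁ θ₂ : ℝ) (h1 : 0 < ρ₁)
    (hfar : 1 + Real.cos (θ₁ - θ₂) ≤ ρ₁ ^ 2) (ρ θ : ℝ) (hρ : 0 < ρ) :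
    ρ₁ ^ 2 - Real.cos (θ₁ - θ₂) ≤ dist (ppt ρ₁ θ₁ ρ₁ θ₂) (gpt ρ θ) ^ 2 := by
  rw [dist_formula]
  have hcos : Real.cos (θ₁ - θ₂) = Real.cos (θ₁-θ) * Real.cos (θ₂-θ)
      + Real.sin (θ₁-θ) * Real.sin (θ₂-θ) := by
    rw [show θ₁ - θ₂ = (θ₁ - θ) - (θ₂ - θ) by ring, Real.cos_sub]
  rw [hcos]
  exact lb_alg ρ₁ ρ ρ⁻¹ _ _ _ _ _ (mul_inv_cancel₀ hρ.ne') (Real.sq_sqrt (by norm_num))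
    (Real.sin_sq_add_cos_sq _) (Real.sin_sq_add_cos_sq _)

theorem sq_dist_diagonal_far (ρ₁ θ₁ θ₂ : ℝ) (h1 : 0 < ρ₁)
    (hfar : 1 + Real.cos (θ₁ - θ₂) ≤ ρ₁ ^ 2) :
    (Metric.infDist (ppt ρ₁ θ₁ ρ₁ θ₂) Gam) ^ 2 = ρ₁ ^ 2 - Real.cos (θ₁ - θ₂) := by
  set co := Real.cos (θ₁ - θ₂) with hco
  have hc2 : Real.sqrt 2 ^ 2 = 2 := Real.sq_sqrt (by norm_num)
  have hcb := Real.neg_one_le_cos (θ₁ - θ₂)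
  have hcnn : (0:ℝ) ≤ ρ₁^2 - co := by nlinarith
  -- construct the minimizer
  set t₀ : ℝ := 2*ρ₁^2 - 2*co with ht₀
  have ht0 : 2 ≤ t₀ := by simp only [ht₀]; nlinarith
  set d : ℝ := Real.sqrt (t₀^2 - 4) with hd
  have hd2 : d^2 = t₀^2 - 4 := Real.sq_sqrt (by nlinarith)
  have hd0 : 0 ≤ d := Real.sqrt_nonneg _
  set u : ℝ := (t₀ + d)/2 with hu
  have hupos : 0 < u := by simp only [hu]; linarith
  set ρ₀ : ℝ := Real.sqrt u with hρ₀def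
  have hρ₀ : 0 < ρ₀ := Real.sqrt_pos.2 hupos
  have hρ₀2 : ρ₀^2 = u := Real.sq_sqrt hupos.le
  have hsum : ρ₀^2 + (ρ₀⁻¹)^2 = t₀ := by
    have h : (ρ₀⁻¹)^2 = u⁻¹ := by rw [inv_pow, hρ₀2]
    rw [hρ₀2, h]
    field_simp
    nlinarith [hd2]
  set X : ℝ := ρ₀ * Real.cos θ₁ + ρ₀⁻¹ * Real.cos θ₂ with hX
  set Y : ℝ := ρ₀ * Real.sin θ₁ + ρ₀⁻¹ * Real.sin θ₂ with hY
  have hinv : ρ₀ * ρ₀⁻¹ = 1 := mul_inv_cancel₀ hρ₀.ne'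
  have hXY : X^2 + Y^2 = 2*ρ₁^2 := by
    have hcs : co = Real.cos θ₁ * Real.cos θ₂ + Real.sin θ₁ * Real.sin θ₂ := by
      rw [hco, Real.cos_sub]
    have e1 := Real.sin_sq_add_cos_sq θ₁
    have e2 := Real.sin_sq_add_cos_sq θ₂
    have expand : X^2 + Y^2 = ρ₀^2*(Real.sin θ₁^2 + Real.cos θ₁^2)
        + (ρ₀⁻¹)^2*(Real.sin θ₂^2 + Real.cos θ₂^2)
        + 2*(ρ₀*ρ₀⁻¹)*(Real.cos θ₁ * Real.cos θ₂ + Real.sin θ₁ * Real.sin θ₂) := by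
      rw [hX, hY]; ring
    rw [expand, e1, e2, hinv]
    linarith [hsum]
  set L : ℝ := Real.sqrt 2 * ρ₁ with hL
  have hLpos : 0 < L := by positivity
  have hL2 : L^2 = 2*ρ₁^2 := by rw [hL, mul_pow, hc2]
  set z : ℂ := (X:ℂ) + (Y:ℂ)*Complex.I with hz
  have hzre : z.re = X := by simp [hz]
  have hzim : z.im = Y := by simp [hz]
  have habs : ‖z‖ = L := by
    rw [Complex.norm_def, Complex.normSq_apply, hzre, hzim]
    rw [show X*X + Y*Y = L^2 by rw [hL2, ← hXY]; ring]
    exact Real.sqrt_sq hLpos.le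
  have hzne : z ≠ 0 := by
    intro h; rw [h] at habs; simp at habs; linarith
  set θ₀ : ℝ := Complex.arg z with hθ₀
  have hcos0 : Real.cos θ₀ = X / L := by rw [hθ₀, Complex.cos_arg hzne, hzre, habs]
  have hsin0 : Real.sin θ₀ = Y / L := by rw [hθ₀, Complex.sin_arg, hzim, habs]
  have hA : ρ₀ * Real.cos (θ₁ - θ₀) + ρ₀⁻¹ * Real.cos (θ₂ - θ₀) = Real.sqrt 2 * ρ₁ := by
    rw [Real.cos_sub, Real.cos_sub, hcos0, hsin0]
    have e : ρ₀ * (Real.cos θ₁ * (X/L) + Real.sin θ₁ * (Y/L))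
        + ρ₀⁻¹ * (Real.cos θ₂ * (X/L) + Real.sin θ₂ * (Y/L)) = (X^2+Y^2)/L := by
      rw [hX, hY]; field_simp; ring
    rw [e, hXY, ← hL2, sq, mul_div_assoc, div_self hLpos.ne', mul_one]
  have hmem : gpt ρ₀ θ₀ ∈ Gam := ⟨ρ₀, θ₀, hρ₀, rfl⟩
  have hdist : dist (ppt ρ₁ θ₁ ρ₁ θ₂) (gpt ρ₀ θ₀) ^ 2 = ρ₁^2 - co := by
    rw [dist_formula, hA, hsum]
    simp only [ht₀]
    linear_combination (-ρ₁^2) * hc2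
  have hub : Metric.infDist (ppt ρ₁ θ₁ ρ₁ θ₂) Gam ≤ Real.sqrt (ρ₁^2 - co) := by
    have : dist (ppt ρ₁ θ₁ ρ₁ θ₂) (gpt ρ₀ θ₀) = Real.sqrt (ρ₁^2 - co) := by
      rw [← hdist, Real.sqrt_sq dist_nonneg]
    rw [← this]
    exact Metric.infDist_le_dist_of_mem hmem
  have hlb : Real.sqrt (ρ₁^2 - co) ≤ Metric.infDist (ppt ρ₁ θ₁ ρ₁ θ₂) Gam := by
    by_contra hcon
    push_neg at hcon
    obtain ⟨y, hy, hlt⟩ := (Metric.infDist_lt_iff ⟨_, hmem⟩).1 hcon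
    obtain ⟨ρ, θ, hρ, rfl⟩ := hy
    have h := lower_bound ρ₁ θ₁ θ₂ h1 hfar ρ θ hρ
    have : Real.sqrt (ρ₁^2 - co) ≤ dist (ppt ρ₁ θ₁ ρ₁ θ₂) (gpt ρ θ) := by
      calc Real.sqrt (ρ₁^2 - co) ≤ Real.sqrt (dist (ppt ρ₁ θ₁ ρ₁ θ₂) (gpt ρ θ)^2) :=
            Real.sqrt_le_sqrt h
        _ = _ := Real.sqrt_sq dist_nonneg
    linarith
  rw [le_antisymm hub hlb, Real.sq_sqrt hcnn]

end
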